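/- There exists a finite ground set V and a monotone submodular function A : 2^V → ℝ≥0 such that the function f : 2^V → ℝ≥0 defined by f(S) = max_{e ∈ V} A(S ∪ {e}) is not submodular. -/

import Mathlib

open Finset

/-- A set function is submodular if `f(X) + f(Y) ≥ f(X ∪ Y) + f(X ∩ Y)`. -/
def Submodular {V : Type*} [DecidableEq V] (f : Finset V → ℝ) : Prop :=
  ∀ X Y : Finset V, f (X ∪ Y) + f (X ∩ Y) ≤ f X + f Y

def MonotoneSet {V : Type*} (f : Finset V → ℝ) : Prop :=
  ∀ X Y : Finset V, X ⊆ Y → f X ≤ f Y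

def cover : Fin 4 → Finset (Fin 3)
  | 0 => {0}
  | 1 => {1, 2}
  | 2 => {1}
  | 3 => {2}

def w : Fin 3 → ℕ
  | 0 => 3
  | _ => 2

def Acov (S : Finset (Fin 4)) : ℕ := ∑ u ∈ S.biUnion cover, w u

lemma Acov_mono : ∀ X Y : Finset (Fin 4), X ⊆ Y → Acov X ≤ Acov Y := by decide

lemma Acov_submod :
    ∀ X Y : Finset (Fin 4), Acov (X ∪ Y) + Acov (X ∩ Y) ≤ Acov X + Acov Y := by decide

/-- there is a finite ground set and a monotone submodular
function `A` such that the one-step lookahead `f(S) = max_{e} A(S ∪ {e})` is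
not submodular. -/
theorem lookahead_not_submodular :
    ∃ (n : ℕ) (hne : (Finset.univ : Finset (Fin n)).Nonempty)
      (A : Finset (Fin n) → ℝ),
      (∀ S, 0 ≤ A S) ∧ MonotoneSet A ∧ Submodular A ∧
      ¬ Submodular (fun S : Finset (Fin n) =>
        Finset.univ.sup' hne fun e => A (insert e S)) := by
  refine ⟨4, univ_nonempty, fun S => (Acov S : ℝ), fun S => by positivity, ?_, ?_, ?_⟩
  · intro X Y h
    dsimp only
    exact_mod_cast Acov_mono X Y h
  · intro X Y
    dsimp only
    exact_mod_cast Acov_submod X Y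
  · intro h
    have := h {2} {3}
    set f := fun S : Finset (Fin 4) =>
      Finset.univ.sup' univ_nonempty fun e => ((Acov (insert e S) : ℝ)) with hf
    have h1 : f ({2} ∪ {3}) = 7 := by
      apply le_antisymm
      · apply Finset.sup'_le
        intro e _
        have : Acov (insert e ({2} ∪ {3})) ≤ 7 := by fin_cases e <;> decide
        exact_mod_cast this
      · have := Finset.le_sup' (fun e => ((Acov (insert e ({2} ∪ {3})) : ℝ)))
          (Finset.mem_univ (0 : Fin 4))
        have h0 : Acov (insert 0 ({2} ∪ {3})) = 7 := by decide
        rw [h0] at this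
        exact_mod_cast this
    have h2 : f ({2} ∩ {3}) = 4 := by
      apply le_antisymm
      · apply Finset.sup'_le
        intro e _
        have : Acov (insert e (({2} : Finset (Fin 4)) ∩ {3})) ≤ 4 := by fin_cases e <;> decide
        exact_mod_cast this
      · have := Finset.le_sup' (fun e => ((Acov (insert e (({2} : Finset (Fin 4)) ∩ {3})) : ℝ)))
          (Finset.mem_univ (1 : Fin 4))
        have h0 : Acov (insert 1 (({2} : Finset (Fin 4)) ∩ {3})) = 4 := by decide
        rw [h0] at this
        exact_mod_cast this
    have h3 : f {2} ≤ 5 := by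
      apply Finset.sup'_le
      intro e _
      have : Acov (insert e ({2} : Finset (Fin 4))) ≤ 5 := by fin_cases e <;> decide
      exact_mod_cast this
    have h4 : f {3} ≤ 5 := by
      apply Finset.sup'_le
      intro e _
      have : Acov (insert e ({3} : Finset (Fin 4))) ≤ 5 := by fin_cases e <;> decide
      exact_mod_cast this
    rw [h1, h2] at this
    linarith
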